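/- Let A be a cancellative monoid and let X, Y be non-empty finite subsets of A such that the elements of Y pairwise commute (equivalently, the subsemigroup generated by Y is commutative). Then |X + Y| ≥ min(γ(Y), |X| + |Y| − 1). -/

import Mathlib

open Pointwise

/-- The order of `z`: the cardinality (in `ℕ∞`) of the subsemigroup
`{z, z+z, z+z+z, …}` generated by `z`. -/
noncomputable def ord {A : Type*} [AddSemigroup A] (z : A) : ℕ∞ :=
  ((AddSubsemigroup.closure {z} : AddSubsemigroup A) : Set A).encard

/-- The Cauchy–Davenport constant of a subset `X` of a monoid:
`γ(X) = sup_{x₀ ∈ X^×} inf_{x ∈ X, x ≠ x₀} ord (x + (-x₀))`. -/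
noncomputable def gamma {A : Type*} [AddMonoid A] (X : Set A) : ℕ∞ :=
  ⨆ (u : AddUnits A) (_ : (u : A) ∈ X),
    ⨅ (x : A) (_ : x ∈ X ∧ x ≠ (u : A)), ord (x + ((-u : AddUnits A) : A))

/-- Key lemma: the normalized case where `0 ∈ Y`. Proved by strong induction on `|Y|`
using the Davenport transform. -/
private lemma CD_key {A : Type*} [AddCancelMonoid A] (n : ℕ) :
    ∀ X Y : Set A, X.Nonempty → X.Finite → Y.Finite → Y.ncard = n →
      (0 : A) ∈ Y → (∀ a ∈ Y, ∀ b ∈ Y, a + b = b + a) →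
      min (⨅ (y : A) (_ : y ∈ Y ∧ y ≠ 0), ord y) (X.encard + Y.encard - 1)
        ≤ (X + Y).encard := by
  induction n using Nat.strong_induction_on with
  | _ n IH =>
  intro X Y hX hXf hYf hn h0 hcomm
  by_cases hY1 : Y = {0}
  · subst hY1
    have hXY : X + ({0} : Set A) = X := by
      ext a; simp [Set.mem_add]
    rw [hXY, Set.encard_singleton]
    have h1 : X.encard + 1 - 1 = X.encard :=
      (WithTop.addLECancellable_iff_ne_top.mpr WithTop.one_ne_top).add_tsub_cancel_right
    rw [h1]
    exact min_le_right _ _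
  · obtain ⟨yb, hybY, hyb0⟩ : ∃ y ∈ Y, y ≠ 0 := by
      by_contra h; push_neg at h
      exact hY1 (Set.eq_singleton_iff_unique_mem.mpr ⟨h0, h⟩)
    by_cases hsub : X + Y ⊆ X
    · -- Case 1: X + Y ⊆ X; then ord yb ≤ |X| ≤ |X + Y|.
      obtain ⟨xb, hxb⟩ := hX
      have hcl : ∀ c ∈ AddSubsemigroup.closure ({yb} : Set A), ∀ x ∈ X, x + c ∈ X := by
        intro c hc
        refine AddSubsemigroup.closure_induction
          (p := fun c _ => ∀ x ∈ X, x + c ∈ X) ?_ ?_ hc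
        · intro z hz x hx
          rw [Set.mem_singleton_iff] at hz; subst hz
          exact hsub (Set.add_mem_add hx hybY)
        · intro a b _ _ pa pb x hx
          rw [← add_assoc]
          exact pb _ (pa x hx)
      have hinj : Set.InjOn (fun c => xb + c)
          ((AddSubsemigroup.closure ({yb} : Set A) : AddSubsemigroup A) : Set A) :=
        fun a _ b _ h => add_left_cancel h
      have himg : (fun c => xb + c) ''
          ((AddSubsemigroup.closure ({yb} : Set A) : AddSubsemigroup A) : Set A) ⊆ X := by
        rintro _ ⟨c, hc, rfl⟩
        exact hcl c hc xb hxb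
      have hord : ord yb ≤ X.encard := by
        rw [ord, ← hinj.encard_image]
        exact Set.encard_le_encard himg
      have hXle : X.encard ≤ (X + Y).encard := by
        refine Set.encard_le_encard fun x hx => ?_
        have := Set.add_mem_add hx h0
        rwa [add_zero] at this
      calc min (⨅ (y : A) (_ : y ∈ Y ∧ y ≠ 0), ord y) (X.encard + Y.encard - 1)
          ≤ ⨅ (y : A) (_ : y ∈ Y ∧ y ≠ 0), ord y := min_le_left _ _
        _ ≤ ord yb := iInf₂_le yb ⟨hybY, hyb0⟩
        _ ≤ X.encard := hord
        _ ≤ (X + Y).encard := hXle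
    · -- Case 2: the Davenport transform.
      rw [Set.not_subset] at hsub
      obtain ⟨z, hzXY, hzX⟩ := hsub
      rw [Set.mem_add] at hzXY
      obtain ⟨xb, hxbX, y2, hy2Y, rfl⟩ := hzXY
      set Y1 : Set A := {y ∈ Y | xb + y ∈ X} with hY1def
      set Y2 : Set A := {y ∈ Y | xb + y ∉ X} with hY2def
      set X1 : Set A := X ∪ (fun y => xb + y) '' Y2 with hX1def
      have hY1sub : Y1 ⊆ Y := Set.sep_subset _ _
      have hY2sub : Y2 ⊆ Y := Set.sep_subset _ _
      have h01 : (0 : A) ∈ Y1 := ⟨h0, by rwa [add_zero]⟩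
      have hy2Y2 : y2 ∈ Y2 := ⟨hy2Y, hzX⟩
      have hY1f : Y1.Finite := hYf.subset hY1sub
      have hY2f : Y2.Finite := hYf.subset hY2sub
      have hX1f : X1.Finite := hXf.union (hY2f.image _)
      have hX1ne : X1.Nonempty := ⟨xb, Set.subset_union_left hxbX⟩
      have hcard : Y1.ncard < n := by
        rw [← hn]
        exact Set.ncard_lt_ncard ⟨hY1sub, fun hcon => hzX (hcon hy2Y).2⟩ hYf
      have hsum : X1 + Y1 ⊆ X + Y := by
        rintro z hz
        rw [Set.mem_add] at hz
        obtain ⟨a, ha, y1, hy1, rfl⟩ := hz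
        rcases ha with haX | ⟨y', hy', rfl⟩
        · exact Set.add_mem_add haX (hY1sub hy1)
        · have hc : y' + y1 = y1 + y' := hcomm _ hy'.1 _ (hY1sub hy1)
          have he : xb + y' + y1 = (xb + y1) + y' := by
            rw [add_assoc, hc, ← add_assoc]
          rw [he]
          exact Set.add_mem_add hy1.2 hy'.1
      have hdisj : Disjoint X ((fun y => xb + y) '' Y2) := by
        rw [Set.disjoint_right]
        rintro _ ⟨y', hy', rfl⟩
        exact hy'.2
      have hX1card : X1.encard = X.encard + Y2.encard := by
        rw [hX1def, Set.encard_union_eq hdisj,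
          ((add_right_injective xb).injOn).encard_image]
      have hYunion : Y1 ∪ Y2 = Y := by
        ext y
        by_cases h : xb + y ∈ X <;> simp [hY1def, hY2def, h]
      have hYdisj : Disjoint Y1 Y2 := by
        rw [Set.disjoint_left]
        rintro y hy1 hy2
        exact hy2.2 hy1.2
      have hYcard : Y.encard = Y1.encard + Y2.encard := by
        rw [← hYunion, Set.encard_union_eq hYdisj]
      have harith : X1.encard + Y1.encard - 1 = X.encard + Y.encard - 1 := by
        rw [hX1card, hYcard, add_assoc, add_comm Y2.encard Y1.encard]
      have hκ : (⨅ (y : A) (_ : y ∈ Y ∧ y ≠ 0), ord y)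
          ≤ ⨅ (y : A) (_ : y ∈ Y1 ∧ y ≠ 0), ord y :=
        le_iInf₂ fun y hy => iInf₂_le y ⟨hY1sub hy.1, hy.2⟩
      have hIH := IH Y1.ncard hcard X1 Y1 hX1ne hX1f hY1f rfl h01
        (fun a ha b hb => hcomm a (hY1sub ha) b (hY1sub hb))
      refine le_trans ?_ (le_trans hIH (Set.encard_le_encard hsum))
      rw [harith]
      exact min_le_min hκ le_rfl

theorem stmt4 {A : Type*} [AddCancelMonoid A] (X Y : Set A)
    (hX : X.Nonempty) (hY : Y.Nonempty) (hXf : X.Finite) (hYf : Y.Finite)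
    (hcomm : ∀ a ∈ Y, ∀ b ∈ Y, a + b = b + a) :
    min (gamma Y) (X.encard + Y.encard - 1) ≤ (X + Y).encard := by
  suffices H : ∀ u : AddUnits A, (u : A) ∈ Y →
      min (⨅ (x : A) (_ : x ∈ Y ∧ x ≠ (u : A)), ord (x + ((-u : AddUnits A) : A)))
        (X.encard + Y.encard - 1) ≤ (X + Y).encard by
    rcases le_or_gt (gamma Y) (X.encard + Y.encard - 1) with hle | hlt
    · rw [min_eq_left hle, gamma]
      refine iSup₂_le fun u hu => ?_
      have h1 : (⨅ (x : A) (_ : x ∈ Y ∧ x ≠ (u : A)), ord (x + ((-u : AddUnits A) : A)))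
          ≤ X.encard + Y.encard - 1 := by
        refine le_trans ?_ hle
        rw [gamma]
        exact le_iSup₂ (f := fun (u : AddUnits A) (_ : (u : A) ∈ Y) =>
          ⨅ (x : A) (_ : x ∈ Y ∧ x ≠ (u : A)), ord (x + ((-u : AddUnits A) : A))) u hu
      have h2 := H u hu
      rwa [min_eq_left h1] at h2
    · rw [min_eq_right hlt.le]
      rw [gamma, lt_iSup_iff] at hlt
      obtain ⟨u, hu⟩ := hlt
      rw [lt_iSup_iff] at hu
      obtain ⟨huY, hult⟩ := hu
      have h2 := H u huY
      rwa [min_eq_right hult.le] at h2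
  intro u hu
  have hun : (u : A) + ((-u : AddUnits A) : A) = 0 := AddUnits.add_neg u
  have hnu0 : ((-u : AddUnits A) : A) + (u : A) = 0 := AddUnits.neg_add u
  set nu : A := ((-u : AddUnits A) : A) with hnudef
  -- nu commutes with every element of Y
  have hkey : ∀ a ∈ Y, nu + a = a + nu := by
    intro a ha
    have h1 : (u : A) + (nu + a) = a := by rw [← add_assoc, hun, zero_add]
    have h2 : (u : A) + (a + nu) = a := by
      rw [← add_assoc, hcomm _ hu _ ha, add_assoc, hun, add_zero]
    exact add_right_injective (u : A) (h1.trans h2.symm)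
  set X2 : Set A := (fun x => x + (u : A)) '' X with hX2def
  set Y2 : Set A := (fun y => nu + y) '' Y with hY2def
  have hXY2 : X2 + Y2 = X + Y := by
    ext z
    simp only [hX2def, hY2def, Set.mem_add, Set.mem_image]
    constructor
    · rintro ⟨_, ⟨x, hx, rfl⟩, _, ⟨y, hy, rfl⟩, rfl⟩
      exact ⟨x, hx, y, hy, by rw [add_assoc, ← add_assoc (u : A), hun, zero_add]⟩
    · rintro ⟨x, hx, y, hy, rfl⟩
      exact ⟨_, ⟨x, hx, rfl⟩, _, ⟨y, hy, rfl⟩,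
        by rw [add_assoc, ← add_assoc (u : A), hun, zero_add]⟩
  have h02 : (0 : A) ∈ Y2 := ⟨(u : A), hu, hnu0⟩
  have hcomm2 : ∀ a ∈ Y2, ∀ b ∈ Y2, a + b = b + a := by
    rintro _ ⟨a, ha, rfl⟩ _ ⟨b, hb, rfl⟩
    have e1 : (nu + a) + (nu + b) = (nu + nu) + (a + b) := by
      rw [add_assoc, ← add_assoc a nu b, ← hkey a ha, add_assoc nu a b, ← add_assoc]
    have e2 : (nu + b) + (nu + a) = (nu + nu) + (b + a) := by
      rw [add_assoc, ← add_assoc b nu a, ← hkey b hb, add_assoc nu b a, ← add_assoc]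
    rw [e1, e2, hcomm a ha b hb]
  have hκ2 : (⨅ (x : A) (_ : x ∈ Y ∧ x ≠ (u : A)), ord (x + nu))
      ≤ ⨅ (y : A) (_ : y ∈ Y2 ∧ y ≠ 0), ord y := by
    refine le_iInf₂ fun y hy => ?_
    obtain ⟨⟨a, ha, rfl⟩, hy0⟩ := hy
    have hane : a ≠ (u : A) := by rintro rfl; exact hy0 hnu0
    show _ ≤ ord (nu + a)
    rw [hkey a ha]
    exact iInf₂_le a ⟨ha, hane⟩
  have hX2c : X2.encard = X.encard := ((add_left_injective (u : A)).injOn).encard_image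
  have hY2c : Y2.encard = Y.encard := ((add_right_injective nu).injOn).encard_image
  have hmain := CD_key Y2.ncard X2 Y2 (hX.image _) (hXf.image _) (hYf.image _) rfl h02 hcomm2
  rw [hXY2, hX2c, hY2c] at hmain
  exact le_trans (min_le_min hκ2 le_rfl) hmain
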